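/- Let ω > 0, λ ∈ ℂ, and let m : ℝ → ℝ be twice continuously differentiable with m(x) + ω > 0 for all x. Write q := √((m+ω)/ω), assume q − 1 ∈ L¹[x,∞) for every x, and define y(x) := x − ∫_x^{+∞} (q(ξ) − 1) dξ. Let φ : ℝ → ℂ be twice continuously differentiable satisfying (ω/(m+ω))·(−φ'' + (1/4)φ) = λ φ on ℝ, and let ψ : ℝ → ℂ be twice continuously differentiable such that ψ(y(x)) = q(x)^{1/2} φ(x) for all x. Then for every x: −ψ''(y(x)) + v(x) ψ(y(x)) = (λ − 1/4) ψ(y(x)), where v := −m/(4(m+ω)) + ω m''/(4(m+ω)²) − 5ω (m')²/(16(m+ω)³). -/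

import Mathlib

open MeasureTheory Set

lemma ici_deriv (f : ℝ → ℝ) (hcont : Continuous f) (hint : ∀ x, IntegrableOn f (Ici x)) (x : ℝ) :
    HasDerivAt (fun t => ∫ ξ in Ici t, f ξ) (-(f x)) x := by
  have key : ∀ a b : ℝ, a ≤ b → (∫ t in Ici a, f t) = (∫ t in a..b, f t) + ∫ t in Ici b, f t := by
    intro a b hab
    rw [intervalIntegral.integral_of_le hab, integral_Ioc_eq_integral_Ioo,
      ← integral_Ico_eq_integral_Ioo, ← setIntegral_union (by
        simp only [Set.disjoint_left, Set.mem_Ico, Set.mem_Ici]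
        intro c hc hc2; exact absurd hc2 (not_le.2 hc.2)) measurableSet_Ici
        ((hint a).mono_set Ico_subset_Ici_self) (hint b), Ico_union_Ici_eq_Ici hab]
  have key2 : ∀ a b : ℝ, (∫ t in Ici a, f t) = (∫ t in a..b, f t) + ∫ t in Ici b, f t := by
    intro a b
    rcases le_total a b with h | h
    · exact key a b h
    · have := key b a h
      rw [intervalIntegral.integral_symm] at this
      linarith [this]
  have : (fun t => ∫ ξ in Ici t, f ξ) = fun t => (∫ ξ in Ici x, f ξ) - ∫ ξ in x..t, f ξ := by
    funext t
    have := key2 x t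
    linarith
  rw [this]
  have hD : HasDerivAt (fun t => ∫ ξ in x..t, f ξ) (f x) x :=
    intervalIntegral.integral_hasDerivAt_right (hcont.intervalIntegrable x x)
      (hcont.stronglyMeasurableAtFilter _ _) hcont.continuousAt
  have h := (hasDerivAt_const x (∫ ξ in Ici x, f ξ)).sub hD
  rw [zero_sub] at h
  exact h

set_option maxHeartbeats 2000000 in
theorem stmt_7 (ω : ℝ) (hω : 0 < ω) (lmb : ℂ)
    (m : ℝ → ℝ) (hm : ContDiff ℝ 2 m) (hpos : ∀ x, m x + ω > 0)
    (q : ℝ → ℝ) (hq : ∀ x, q x = Real.sqrt ((m x + ω) / ω))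
    (hint : ∀ x : ℝ, IntegrableOn (fun ξ => q ξ - 1) (Ici x))
    (y : ℝ → ℝ) (hy : ∀ x, y x = x - ∫ ξ in Ici x, (q ξ - 1))
    (φ : ℝ → ℂ) (hφ : ContDiff ℝ 2 φ)
    (hode : ∀ x : ℝ,
      ((ω / (m x + ω) : ℝ) : ℂ) * (-(deriv (deriv φ) x) + (1 / 4) * φ x)
        = lmb * φ x)
    (ψ : ℝ → ℂ) (hψ : ContDiff ℝ 2 ψ)
    (hψφ : ∀ x : ℝ, ψ (y x) = (Real.sqrt (q x) : ℂ) * φ x)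
    (v : ℝ → ℝ)
    (hv : ∀ x, v x = -(m x) / (4 * (m x + ω))
        + ω * deriv (deriv m) x / (4 * (m x + ω) ^ 2)
        - 5 * ω * (deriv m x) ^ 2 / (16 * (m x + ω) ^ 3)) :
    ∀ x : ℝ,
      -(deriv (deriv ψ) (y x)) + (v x : ℂ) * ψ (y x)
        = (lmb - 1 / 4) * ψ (y x) := by
  intro x
  have hω' : ω ≠ 0 := ne_of_gt hω
  -- basic positivity
  have hqpos : ∀ t, 0 < q t := by
    intro t
    rw [hq t]
    exact Real.sqrt_pos.2 (div_pos (hpos t) hω)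
  have hqsq : ∀ t, q t ^ 2 = (m t + ω) / ω := by
    intro t
    rw [hq t, Real.sq_sqrt (le_of_lt (div_pos (hpos t) hω))]
  set s : ℝ → ℝ := fun t => Real.sqrt (q t) with hs_def
  have hspos : ∀ t, 0 < s t := fun t => Real.sqrt_pos.2 (hqpos t)
  have hssq : ∀ t, s t ^ 2 = q t := fun t => Real.sq_sqrt (le_of_lt (hqpos t))
  -- differentiability of m, φ, ψ
  have hm1 : Differentiable ℝ m ∧ ContDiff ℝ 1 (deriv m) := by
    have := contDiff_succ_iff_deriv.mp (show ContDiff ℝ (1 + 1) m by norm_num [hm])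
    exact ⟨this.1, this.2.2⟩
  have hm' : ∀ t, HasDerivAt m (deriv m t) t := fun t => (hm1.1 t).hasDerivAt
  have hm'' : ∀ t, HasDerivAt (deriv m) (deriv (deriv m) t) t := fun t =>
    ((hm1.2.differentiable one_ne_zero) t).hasDerivAt
  have hφ1 : Differentiable ℝ φ ∧ ContDiff ℝ 1 (deriv φ) := by
    have := contDiff_succ_iff_deriv.mp (show ContDiff ℝ (1 + 1) φ by norm_num [hφ])
    exact ⟨this.1, this.2.2⟩
  have hφ' : ∀ t, HasDerivAt φ (deriv φ t) t := fun t => (hφ1.1 t).hasDerivAt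
  have hφ'' : ∀ t, HasDerivAt (deriv φ) (deriv (deriv φ) t) t := fun t =>
    ((hφ1.2.differentiable one_ne_zero) t).hasDerivAt
  have hψ1 : Differentiable ℝ ψ ∧ ContDiff ℝ 1 (deriv ψ) := by
    have := contDiff_succ_iff_deriv.mp (show ContDiff ℝ (1 + 1) ψ by norm_num [hψ])
    exact ⟨this.1, this.2.2⟩
  -- derivative of q
  set qd : ℝ → ℝ := fun t => deriv m t / (2 * ω * q t) with hqd_def
  have hq' : ∀ t, HasDerivAt q (qd t) t := by
    intro t
    have h1 : HasDerivAt (fun u => (m u + ω) / ω) (deriv m t / ω) t :=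
      ((hm' t).add_const ω).div_const ω
    have h2 : HasDerivAt Real.sqrt (1 / (2 * Real.sqrt ((m t + ω) / ω))) ((m t + ω) / ω) :=
      Real.hasDerivAt_sqrt (ne_of_gt (div_pos (hpos t) hω))
    have h3 := h2.comp t h1
    have h4 : Real.sqrt ∘ (fun u => (m u + ω) / ω) = q := by
      funext u; exact (hq u).symm
    rw [h4] at h3
    refine h3.congr_deriv ?_
    rw [hqd_def]
    simp only
    rw [← hq t]
    ring
  -- derivative of s
  set sd : ℝ → ℝ := fun t => deriv m t / (4 * ω * (q t * s t)) with hsd_def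
  have hs' : ∀ t, HasDerivAt s (sd t) t := by
    intro t
    have h2 : HasDerivAt Real.sqrt (1 / (2 * Real.sqrt (q t))) (q t) :=
      Real.hasDerivAt_sqrt (ne_of_gt (hqpos t))
    have h3 := h2.comp t (hq' t)
    have h4 : Real.sqrt ∘ q = s := rfl
    rw [h4] at h3
    refine h3.congr_deriv ?_
    rw [hsd_def, hqd_def]
    simp only
    rw [show Real.sqrt (q t) = s t from rfl]
    ring
  -- derivative of y
  have hy' : ∀ t, HasDerivAt y (q t) t := by
    intro t
    have hqc : Continuous q := by
      have : q = fun u => Real.sqrt ((m u + ω) / ω) := funext hq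
      rw [this]
      exact (Real.continuous_sqrt.comp ((hm.continuous.add continuous_const).div_const ω))
    have hc : Continuous (fun ξ => q ξ - 1) := hqc.sub continuous_const
    have hI := ici_deriv (fun ξ => q ξ - 1) hc hint t
    have hyf : y = fun u => u - ∫ ξ in Ici u, (q ξ - 1) := funext hy
    rw [hyf]
    exact ((hasDerivAt_id t).sub hI).congr_deriv (by ring)
  -- Φ and its derivative
  set Φ : ℝ → ℂ := fun t => (s t : ℂ) * φ t with hΦ_def
  set Φ1 : ℝ → ℂ := fun t => (sd t : ℂ) * φ t + (s t : ℂ) * deriv φ t with hΦ1_def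
  have hΦ' : ∀ t, HasDerivAt Φ (Φ1 t) t := fun t =>
    ((hs' t).ofReal_comp.mul (hφ' t))
  -- first derivative of ψ along y
  have hψd : ∀ t, deriv ψ (y t) = Φ1 t / (q t : ℂ) := by
    intro t
    have c1 : HasDerivAt (ψ ∘ y) (q t • deriv ψ (y t)) t :=
      HasDerivAt.scomp t ((hψ1.1 (y t)).hasDerivAt) (hy' t)
    have c2 : ψ ∘ y = Φ := by
      funext u
      simp only [Function.comp, hΦ_def]
      exact hψφ u
    rw [c2] at c1
    have := c1.unique (hΦ' t)
    rw [← this]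
    rw [Complex.real_smul]
    field_simp [Complex.ofReal_ne_zero.2 (ne_of_gt (hqpos t))]
  -- now fix x and compute second derivative
  set G : ℝ → ℂ := fun t => Φ1 t / (q t : ℂ) with hG_def
  -- derivative of sd at x
  have hden : (4 * ω * (q x * s x)) ≠ 0 :=
    ne_of_gt (mul_pos (mul_pos (by norm_num) hω) (mul_pos (hqpos x) (hspos x)))
  have hsd' : HasDerivAt sd
      ((deriv (deriv m) x * (4 * ω * (q x * s x)) -
        deriv m x * (4 * ω * (qd x * s x + q x * sd x))) / (4 * ω * (q x * s x)) ^ 2) x := by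
    exact (hm'' x).div (((hq' x).mul (hs' x)).const_mul (4 * ω)) hden
  -- derivative of Φ1 at x
  set sdd : ℝ := (deriv (deriv m) x * (4 * ω * (q x * s x)) -
        deriv m x * (4 * ω * (qd x * s x + q x * sd x))) / (4 * ω * (q x * s x)) ^ 2 with hsdd_def
  set Φ2 : ℂ := ((sdd : ℂ) * φ x + (sd x : ℂ) * deriv φ x) +
      ((sd x : ℂ) * deriv φ x + (s x : ℂ) * deriv (deriv φ) x) with hΦ2_def
  have hΦ1' : HasDerivAt Φ1 Φ2 x := by
    rw [hΦ2_def]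
    exact (hsd'.ofReal_comp.mul (hφ' x)).add ((hs' x).ofReal_comp.mul (hφ'' x))
  have hQne : ((q x : ℝ) : ℂ) ≠ 0 := Complex.ofReal_ne_zero.2 (ne_of_gt (hqpos x))
  have hG' : HasDerivAt G ((Φ2 * (q x : ℂ) - Φ1 x * (qd x : ℂ)) / ((q x : ℂ)) ^ 2) x :=
    hΦ1'.div (hq' x).ofReal_comp hQne
  -- second derivative of ψ at y x
  have hddψ : deriv (deriv ψ) (y x)
      = (Φ2 * (q x : ℂ) - Φ1 x * (qd x : ℂ)) / ((q x : ℂ)) ^ 2 / (q x : ℂ) := by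
    have c1 : HasDerivAt (deriv ψ ∘ y) (q x • deriv (deriv ψ) (y x)) x :=
      HasDerivAt.scomp x ((hψ1.2.differentiable one_ne_zero (y x)).hasDerivAt) (hy' x)
    have c2 : deriv ψ ∘ y = G := funext fun t => hψd t
    rw [c2] at c1
    have := c1.unique hG'
    rw [← this, Complex.real_smul]
    field_simp
  -- the ODE for φ
  have hMWne : ((m x : ℝ) : ℂ) + (ω : ℂ) ≠ 0 := by
    have : ((m x + ω : ℝ) : ℂ) ≠ 0 := Complex.ofReal_ne_zero.2 (ne_of_gt (hpos x))
    push_cast at this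
    exact this
  have hWne : ((ω : ℝ) : ℂ) ≠ 0 := Complex.ofReal_ne_zero.2 hω'
  have hODE : deriv (deriv φ) x
      = (1 / 4) * φ x - lmb * ((m x : ℂ) + ω) / ω * φ x := by
    have h0 := hode x
    push_cast at h0
    field_simp at h0 ⊢
    linear_combination -h0
  -- relations
  have hSne : ((s x : ℝ) : ℂ) ≠ 0 := Complex.ofReal_ne_zero.2 (ne_of_gt (hspos x))
  have hQS : ((q x : ℝ) : ℂ) = ((s x : ℝ) : ℂ) ^ 2 := by
    exact_mod_cast (hssq x).symm
  have hMS : ((m x : ℝ) : ℂ) = (ω : ℂ) * ((s x : ℝ) : ℂ) ^ 4 - ω := by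
    have h1 : (q x : ℝ) ^ 2 * ω = m x + ω := by
      rw [hqsq x]; field_simp
    have h2 : ((q x : ℝ) : ℂ) ^ 2 * (ω : ℂ) = (m x : ℂ) + ω := by exact_mod_cast h1
    rw [hQS] at h2
    linear_combination -h2
  -- clean closed forms for the coefficient functions
  have c_qd : ((qd x : ℝ) : ℂ) = ((deriv m x : ℝ) : ℂ) / (2 * (ω : ℂ) * ((s x : ℝ) : ℂ) ^ 2) := by
    rw [hqd_def]
    push_cast
    rw [hQS]
  have c_sd : ((sd x : ℝ) : ℂ) = ((deriv m x : ℝ) : ℂ) / (4 * (ω : ℂ) * ((s x : ℝ) : ℂ) ^ 3) := by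
    rw [hsd_def]
    push_cast
    rw [hQS]
    ring
  have c_sdd : ((sdd : ℝ) : ℂ)
      = (4 * ((deriv (deriv m) x : ℝ) : ℂ) * (ω : ℂ) * ((s x : ℝ) : ℂ) ^ 4
          - 3 * ((deriv m x : ℝ) : ℂ) ^ 2)
        / (16 * (ω : ℂ) ^ 2 * ((s x : ℝ) : ℂ) ^ 7) := by
    rw [hsdd_def, hsd_def, hqd_def]
    push_cast
    rw [hQS]
    rw [div_eq_div_iff (by simp [hSne, hWne]) (by simp [hSne, hWne])]
    field_simp [hSne, hWne]
    ring
  have hODE2 : deriv (deriv φ) x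
      = (1 / 4) * φ x - lmb * ((s x : ℝ) : ℂ) ^ 4 * φ x := by
    rw [hODE, hMS]
    field_simp [hWne]
    ring
  -- final computation
  have hsx : (Real.sqrt (q x) : ℂ) = ((s x : ℝ) : ℂ) := rfl
  have hcol : ∀ z : ℂ, z - (ω : ℂ) + (ω : ℂ) = z := fun z => by ring
  have c_Phi1 : Φ1 x
      = (((deriv m x : ℝ) : ℂ) * φ x + 4 * (ω : ℂ) * ((s x : ℝ) : ℂ) ^ 4 * deriv φ x)
        / (4 * (ω : ℂ) * ((s x : ℝ) : ℂ) ^ 3) := by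
    rw [hΦ1_def]
    simp only
    rw [c_sd, eq_div_iff (by simp [hSne, hWne])]
    field_simp [hSne, hWne]
  have c_Phi2 : Φ2
      = ((4 * ((deriv (deriv m) x : ℝ) : ℂ) * (ω : ℂ) * ((s x : ℝ) : ℂ) ^ 4
            - 3 * ((deriv m x : ℝ) : ℂ) ^ 2) * φ x
          + 8 * (ω : ℂ) * ((s x : ℝ) : ℂ) ^ 4 * ((deriv m x : ℝ) : ℂ) * deriv φ x
          + 4 * (ω : ℂ) ^ 2 * ((s x : ℝ) : ℂ) ^ 8 * φ x
          - 16 * lmb * (ω : ℂ) ^ 2 * ((s x : ℝ) : ℂ) ^ 12 * φ x)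
        / (16 * (ω : ℂ) ^ 2 * ((s x : ℝ) : ℂ) ^ 7) := by
    rw [hΦ2_def, c_sdd, c_sd, hODE2]
    rw [eq_div_iff (by simp [hSne, hWne])]
    field_simp [hSne, hWne]
    ring_nf
  have F1 : deriv (deriv ψ) (y x)
      = ((4 * ((deriv (deriv m) x : ℝ) : ℂ) * (ω : ℂ) * ((s x : ℝ) : ℂ) ^ 4
          - 5 * ((deriv m x : ℝ) : ℂ) ^ 2 + 4 * (ω : ℂ) ^ 2 * ((s x : ℝ) : ℂ) ^ 8
          - 16 * lmb * (ω : ℂ) ^ 2 * ((s x : ℝ) : ℂ) ^ 12) * φ x)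
        / (16 * (ω : ℂ) ^ 2 * ((s x : ℝ) : ℂ) ^ 11) := by
    rw [hddψ, c_Phi2, c_Phi1, c_qd, hQS]
    rw [div_div, div_eq_div_iff (by simp [hSne]) (by simp [hSne, hWne])]
    field_simp [hSne, hWne]
    ring_nf
  have F2 : ((v x : ℝ) : ℂ)
      = (-4 * ((ω : ℂ) * ((s x : ℝ) : ℂ) ^ 4 - (ω : ℂ)) * (ω : ℂ) * ((s x : ℝ) : ℂ) ^ 8
          + 4 * (ω : ℂ) * ((deriv (deriv m) x : ℝ) : ℂ) * ((s x : ℝ) : ℂ) ^ 4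
          - 5 * ((deriv m x : ℝ) : ℂ) ^ 2)
        / (16 * (ω : ℂ) ^ 2 * ((s x : ℝ) : ℂ) ^ 12) := by
    rw [hv x]
    push_cast
    rw [hMS]
    simp only [hcol]
    rw [eq_div_iff (by simp [hSne, hWne])]
    field_simp [hSne, hWne]
    ring_nf
  rw [hψφ x, hsx, F1, F2]
  field_simp [hSne, hWne]
  ring_nf
  try field_simp [hSne, hWne]
  try ring
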